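/- If X and Y are independent random variables each exponentially distributed with rate 1, then for every g > 0, P(X·Y ≤ g) = 1 - 2√g · K₁(2√g), where K₁ is the modified Bessel function of the second kind of order 1. -/

import Mathlib

open Real MeasureTheory ProbabilityTheory Set

/-- Modified Bessel function of the second kind of order 1 (integral representation). -/
noncomputable def besselK1 (x : ℝ) : ℝ :=
  ∫ t in Set.Ioi (0 : ℝ), Real.exp (-x * Real.cosh t) * Real.cosh t

lemma range_mul_exp {c : ℝ} (hc : 0 < c) : Set.range (fun t : ℝ => c * Real.exp t) = Ioi 0 := by
  ext x
  constructor
  · rintro ⟨t, rfl⟩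
    exact mul_pos hc (exp_pos t)
  · intro hx
    refine ⟨Real.log (x / c), ?_⟩
    show c * Real.exp (Real.log (x / c)) = x
    rw [Real.exp_log (div_pos hx hc)]; field_simp

lemma subst_key {g : ℝ} (hg : 0 < g) :
    (∫ x in Ioi (0:ℝ), Real.exp (-(x + g / x)))
      = Real.sqrt g * ∫ t : ℝ, Real.exp (-(2 * Real.sqrt g) * Real.cosh t) * Real.exp t := by
  set c := Real.sqrt g with hc
  have hc0 : 0 < c := Real.sqrt_pos.mpr hg
  have hcsq : c * c = g := Real.mul_self_sqrt hg.le
  have hderiv : ∀ t ∈ (univ : Set ℝ), HasDerivWithinAt (fun t : ℝ => c * Real.exp t)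
      (c * Real.exp t) univ t :=
    fun t _ => ((Real.hasDerivAt_exp t).const_mul c).hasDerivWithinAt
  have hinj : InjOn (fun t : ℝ => c * Real.exp t) univ := by
    intro a _ b _ h
    simpa using Real.exp_injective (mul_left_cancel₀ hc0.ne' h)
  have himg : (fun t : ℝ => c * Real.exp t) '' univ = Ioi 0 := by
    rw [image_univ, range_mul_exp hc0]
  have := MeasureTheory.integral_image_eq_integral_abs_deriv_smul MeasurableSet.univ hderiv hinj
    (fun x => Real.exp (-(x + g / x)))
  rw [himg] at this
  rw [this, MeasureTheory.setIntegral_univ]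
  rw [← integral_const_mul]
  congr 1
  ext t
  have het : Real.exp t ≠ 0 := (Real.exp_pos t).ne'
  have h1 : c * Real.exp t + g / (c * Real.exp t) = 2 * c * Real.cosh t := by
    rw [Real.cosh_eq]
    have h2 : c ^ 2 = g := by rw [sq]; exact hcsq
    have h3 : Real.exp t * Real.exp (-t) = 1 := by rw [← Real.exp_add]; simp
    field_simp
    ring_nf
    linear_combination (-c ^ 2) * h3 - h2
  rw [abs_of_pos (mul_pos hc0 (Real.exp_pos t)), smul_eq_mul, h1]
  ring

lemma integrable_h {g : ℝ} (hg : 0 < g) :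
    IntegrableOn (fun x => Real.exp (-(x + g / x))) (Ioi (0:ℝ)) := by
  apply Integrable.mono (exp_neg_integrableOn_Ioi 0 one_pos)
  · exact ((measurable_id.add (measurable_const.div measurable_id)).neg.exp).aestronglyMeasurable
  · rw [ae_restrict_iff' measurableSet_Ioi]
    refine .of_forall fun x hx => ?_
    simp only [Real.norm_eq_abs, abs_of_pos (Real.exp_pos _), neg_one_mul]
    exact Real.exp_le_exp.mpr (by
      have : 0 ≤ g / x := le_of_lt (div_pos hg hx)
      linarith)

lemma integrable_F {g : ℝ} (hg : 0 < g) :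
    Integrable (fun t : ℝ => Real.exp (-(2 * Real.sqrt g) * Real.cosh t) * Real.exp t) := by
  set c := Real.sqrt g with hc
  have hc0 : 0 < c := Real.sqrt_pos.mpr hg
  have hcsq : c * c = g := Real.mul_self_sqrt hg.le
  have hderiv : ∀ t ∈ (univ : Set ℝ), HasDerivWithinAt (fun t : ℝ => c * Real.exp t)
      (c * Real.exp t) univ t :=
    fun t _ => ((Real.hasDerivAt_exp t).const_mul c).hasDerivWithinAt
  have hinj : InjOn (fun t : ℝ => c * Real.exp t) univ := by
    intro a _ b _ h
    simpa using Real.exp_injective (mul_left_cancel₀ hc0.ne' h)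
  have himg : (fun t : ℝ => c * Real.exp t) '' univ = Ioi 0 := by
    rw [image_univ, range_mul_exp hc0]
  have key := (MeasureTheory.integrableOn_image_iff_integrableOn_abs_deriv_smul
    MeasurableSet.univ hderiv hinj (fun x => Real.exp (-(x + g / x)))).mp
    (by rw [himg]; exact integrable_h hg)
  rw [integrableOn_univ] at key
  have := key.const_mul c⁻¹
  refine this.congr (Filter.EventuallyEq.of_eq (funext fun t => ?_))
  have het : Real.exp t ≠ 0 := (Real.exp_pos t).ne'
  have h1 : c * Real.exp t + g / (c * Real.exp t) = 2 * c * Real.cosh t := by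
    have h2 : c ^ 2 = g := by rw [sq]; exact hcsq
    have h3 : Real.exp t * Real.exp (-t) = 1 := by rw [← Real.exp_add]; simp
    rw [Real.cosh_eq]
    field_simp
    ring_nf
    linear_combination (-c ^ 2) * h3 - h2
  rw [abs_of_pos (mul_pos hc0 (Real.exp_pos t)), smul_eq_mul, h1]
  field_simp

lemma symm_step {g : ℝ} (hg : 0 < g) :
    (∫ t : ℝ, Real.exp (-(2 * Real.sqrt g) * Real.cosh t) * Real.exp t)
      = 2 * besselK1 (2 * Real.sqrt g) := by
  set a := 2 * Real.sqrt g with ha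
  set F := fun t : ℝ => Real.exp (-a * Real.cosh t) * Real.exp t with hF
  have hFi : Integrable F := integrable_F hg
  have hFneg : Integrable (fun t => F (-t)) := by
    have h := (Measure.measurePreserving_neg (volume : Measure ℝ)).integrable_comp_emb
      (MeasurableEquiv.neg ℝ).measurableEmbedding (g := F)
    exact h.mpr hFi
  have hneg : (∫ t : ℝ, F (-t)) = ∫ t : ℝ, F t := integral_neg_eq_self F volume
  have hcosh : ∀ t : ℝ, Real.exp (-a * Real.cosh t) * Real.cosh t = (F t + F (-t)) / 2 := by
    intro t
    simp only [hF, Real.cosh_neg]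
    rw [Real.cosh_eq]
    ring
  have h2 : (∫ t : ℝ, Real.exp (-a * Real.cosh t) * Real.cosh t) = ∫ t : ℝ, F t := by
    calc (∫ t : ℝ, Real.exp (-a * Real.cosh t) * Real.cosh t)
        = ∫ t : ℝ, (F t + F (-t)) / 2 := by simp_rw [hcosh]
      _ = ((∫ t : ℝ, F t) + ∫ t : ℝ, F (-t)) / 2 := by
          rw [← integral_add hFi hFneg]; simp_rw [integral_div]
      _ = ∫ t : ℝ, F t := by rw [hneg]; ring
  have h3 : (∫ t : ℝ, Real.exp (-a * Real.cosh t) * Real.cosh t) = 2 * besselK1 a := by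
    simp only [besselK1]
    rw [← integral_comp_abs (f := fun t => Real.exp (-a * Real.cosh t) * Real.cosh t)]
    simp_rw [Real.cosh_abs]
  rw [← h2, h3]

lemma I_eq {g : ℝ} (hg : 0 < g) :
    (∫ x in Ioi (0:ℝ), Real.exp (-(x + g / x)))
      = 2 * Real.sqrt g * besselK1 (2 * Real.sqrt g) := by
  rw [subst_key hg, symm_step hg]; ring

theorem stmt_1 {Ω : Type*} [MeasurableSpace Ω] (μ : Measure Ω) [IsProbabilityMeasure μ]
    (X Y : Ω → ℝ) (hXY : IndepFun X Y μ)
    (hX : Measure.map X μ = expMeasure 1) (hY : Measure.map Y μ = expMeasure 1)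
    (g : ℝ) (hg : 0 < g) :
    (μ {ω | X ω * Y ω ≤ g}).toReal =
      1 - 2 * Real.sqrt g * besselK1 (2 * Real.sqrt g) := by
  haveI hprob : IsProbabilityMeasure (expMeasure 1) := isProbabilityMeasure_expMeasure one_pos
  have hνne : (expMeasure 1 : Measure ℝ) ≠ 0 := IsProbabilityMeasure.ne_zero _
  have hXm : AEMeasurable X μ := by
    by_contra h
    rw [Measure.map_of_not_aemeasurable h] at hX
    exact hνne hX.symm
  have hYm : AEMeasurable Y μ := by
    by_contra h
    rw [Measure.map_of_not_aemeasurable h] at hY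
    exact hνne hY.symm
  have hmap : Measure.map (fun ω => (X ω, Y ω)) μ = (expMeasure 1).prod (expMeasure 1) := by
    rw [(indepFun_iff_map_prod_eq_prod_map_map hXm hYm).mp hXY, hX, hY]
  set S : Set (ℝ × ℝ) := {p | p.1 * p.2 ≤ g} with hSdef
  have hS : MeasurableSet S := measurableSet_le (measurable_fst.mul measurable_snd) measurable_const
  have hμS : μ {ω | X ω * Y ω ≤ g} = (expMeasure 1).prod (expMeasure 1) S := by
    rw [show {ω | X ω * Y ω ≤ g} = (fun ω => (X ω, Y ω)) ⁻¹' S from rfl,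
      ← Measure.map_apply_of_aemeasurable (hXm.prodMk hYm) hS, hmap]
  have hwd : expMeasure 1 = volume.withDensity (exponentialPDF 1) := rfl
  have hIic : ∀ c : ℝ, 0 ≤ c → expMeasure 1 (Iic c) = ENNReal.ofReal (1 - Real.exp (-c)) := by
    intro c hc
    rw [hwd, withDensity_apply _ measurableSet_Iic,
      lintegral_exponentialPDF_eq_antiDeriv one_pos c, if_pos hc, one_mul]
  have hIoi : ∀ c : ℝ, 0 ≤ c → expMeasure 1 (Ioi c) = ENNReal.ofReal (Real.exp (-c)) := by
    intro c hc
    have h1 : expMeasure 1 (Ioi c) = 1 - expMeasure 1 (Iic c) := by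
      have h2 := measure_compl (μ := expMeasure 1) (s := Iic c) measurableSet_Iic (measure_ne_top _ _)
      rw [compl_Iic] at h2
      rw [h2, measure_univ]
    have hle : Real.exp (-c) ≤ 1 := Real.exp_le_one_iff.mpr (by linarith)
    rw [h1, hIic c hc, ← ENNReal.ofReal_one, ← ENNReal.ofReal_sub _ (by linarith)]
    norm_num
  have hnull : expMeasure 1 (Iic 0) = 0 := by
    rw [hIic 0 le_rfl]; simp
  have hprod : (expMeasure 1).prod (expMeasure 1) Sᶜ
      = ∫⁻ x, expMeasure 1 (Prod.mk x ⁻¹' Sᶜ) ∂(expMeasure 1) := Measure.prod_apply hS.compl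
  have hae : ∀ᵐ x ∂(expMeasure 1), x ∈ Ioi (0:ℝ) := by
    rw [ae_iff]
    have h3 : {x : ℝ | ¬ x ∈ Ioi (0:ℝ)} = Iic 0 := by ext x; simp [not_lt]
    rw [h3]; exact hnull
  have key : ∀ᵐ x ∂(expMeasure 1),
      expMeasure 1 (Prod.mk x ⁻¹' Sᶜ) = ENNReal.ofReal (Real.exp (-(g / x))) := by
    filter_upwards [hae] with x hx
    have hx0 : (0:ℝ) < x := hx
    have hpre2 : Prod.mk x ⁻¹' Sᶜ = Ioi (g / x) := by
      ext y
      simp only [mem_preimage, mem_compl_iff, hSdef, mem_setOf_eq, not_le, mem_Ioi]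
      rw [div_lt_iff₀ hx0]
      constructor <;> intro h <;> linarith [h]
    rw [hpre2, hIoi (g / x) (le_of_lt (div_pos hg hx0))]
  rw [lintegral_congr_ae key] at hprod
  have hmeas2 : Measurable fun x : ℝ => ENNReal.ofReal (Real.exp (-(g / x))) :=
    ((measurable_const.div measurable_id).neg.exp).ennreal_ofReal
  have hpdfm : Measurable (exponentialPDF 1) := (measurable_exponentialPDFReal 1).ennreal_ofReal
  have hlin2 : (∫⁻ x, ENNReal.ofReal (Real.exp (-(g / x))) ∂(expMeasure 1))
      = ∫⁻ x, exponentialPDF 1 x * ENNReal.ofReal (Real.exp (-(g / x))) ∂volume := by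
    rw [hwd]
    exact lintegral_withDensity_eq_lintegral_mul volume hpdfm hmeas2
  rw [hlin2] at hprod
  set I : ℝ := ∫ x in Ioi (0:ℝ), Real.exp (-(x + g / x)) with hIdef
  have hI0 : 0 ≤ I := integral_nonneg fun x => (Real.exp_pos _).le
  have hlin : (∫⁻ x, exponentialPDF 1 x * ENNReal.ofReal (Real.exp (-(g / x))) ∂volume)
      = ENNReal.ofReal I := by
    rw [← lintegral_add_compl
      (fun x => exponentialPDF 1 x * ENNReal.ofReal (Real.exp (-(g / x)))) measurableSet_Ioi]
    have hIic0 : (∫⁻ x in (Ioi (0:ℝ))ᶜ, exponentialPDF 1 x * ENNReal.ofReal (Real.exp (-(g / x)))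
        ∂volume) = 0 := by
      rw [compl_Ioi, ← setLIntegral_congr (Iio_ae_eq_Iic (a := (0:ℝ)))]
      rw [setLIntegral_congr_fun measurableSet_Iio (fun x (hx : x < 0) => by
        rw [exponentialPDF_of_neg hx, zero_mul])]
      exact lintegral_zero
    have hIoi0 : (∫⁻ x in Ioi (0:ℝ), exponentialPDF 1 x * ENNReal.ofReal (Real.exp (-(g / x)))
        ∂volume) = ENNReal.ofReal I := by
      rw [setLIntegral_congr_fun measurableSet_Ioi (fun x (hx : 0 < x) => by
        show exponentialPDF 1 x * ENNReal.ofReal (Real.exp (-(g / x)))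
          = ENNReal.ofReal (Real.exp (-(x + g / x)))
        rw [exponentialPDF_of_nonneg hx.le, one_mul,
          ← ENNReal.ofReal_mul (Real.exp_pos _).le, ← Real.exp_add]
        congr 1
        ring)]
      rw [hIdef, ofReal_integral_eq_lintegral_ofReal (integrable_h hg)
        (ae_of_all _ fun x => (Real.exp_pos _).le)]
    rw [hIic0, hIoi0, add_zero]
  rw [hlin] at hprod
  have hsum := measure_add_measure_compl (μ := (expMeasure 1).prod (expMeasure 1)) hS
  rw [measure_univ] at hsum
  have htr := congrArg ENNReal.toReal hsum
  rw [ENNReal.toReal_add (measure_ne_top _ _) (measure_ne_top _ _), hprod,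
    ENNReal.toReal_ofReal hI0, ENNReal.toReal_one] at htr
  have hIeq : I = 2 * Real.sqrt g * besselK1 (2 * Real.sqrt g) := I_eq hg
  rw [hμS]
  linarith
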